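/- Consider the matched pair $(\mathbb{S}_4, C_5)$ from the exact factorization $\mathbb{S}_5 = F C_5$, $F$ the stabilizer of $5$, $C_5 = \langle (1\,2\,3\,4\,5)\rangle$. The action $\vartriangleright$ of $C_5$ on the cyclic subgroup $\langle (1\,3\,4\,2)\rangle \leq F$ is trivial: $g \vartriangleright x = x$ for all $g \in C_5$ and all $x \in \langle (1\,3\,4\,2)\rangle$. -/

import Mathlib

/-- The 4-cycle `(1 3 4 2)` of `S_5`, 0-indexed as the cycle `(0 2 3 1)` on `Fin 5`. -/
def cycle1342 : Equiv.Perm (Fin 5) :=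
  Equiv.swap 0 2 * Equiv.swap 2 3 * Equiv.swap 3 1

lemma zpowers_fix4 (p : Equiv.Perm (Fin 5)) (hp : p ∈ Subgroup.zpowers (finRotate 5))
    (h4 : p 4 = 4) : p = 1 := by
  obtain ⟨k, rfl⟩ := hp
  change ((finRotate 5) ^ k) 4 = 4 at h4
  show (finRotate 5) ^ k = 1
  have hk : k = 5 * (k / 5) + k % 5 := (Int.mul_ediv_add_emod k 5).symm
  have h5 : (finRotate 5) ^ (5 : ℕ) = 1 := by decide
  have hred : (finRotate 5) ^ k = (finRotate 5) ^ ((k % 5).toNat) := by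
    conv_lhs => rw [hk]
    rw [zpow_add, zpow_mul]
    have : (finRotate 5) ^ (5 : ℤ) = 1 := by
      rw [show (5 : ℤ) = ((5 : ℕ) : ℤ) by norm_num, zpow_natCast, h5]
    rw [this, one_zpow, one_mul,
      ← zpow_natCast (finRotate 5) ((k % 5).toNat),
      Int.toNat_of_nonneg (Int.emod_nonneg k (by norm_num))]
  rw [hred] at h4 ⊢
  have hlt : (k % 5).toNat < 5 := by omega
  interval_cases h : (k % 5).toNat <;> revert h4 <;> decide

lemma c_mem_norm : cycle1342 ∈ Subgroup.normalizer (Subgroup.zpowers (finRotate 5) : Set (Equiv.Perm (Fin 5))) := by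
  rw [Subgroup.mem_normalizer_iff]
  intro h
  constructor
  · rintro ⟨n, rfl⟩
    show cycle1342 * (finRotate 5) ^ n * cycle1342⁻¹ ∈ _
    rw [← conj_zpow]
    have : cycle1342 * finRotate 5 * cycle1342⁻¹ = (finRotate 5) ^ (3 : ℕ) := by decide
    rw [this, ← zpow_natCast, ← zpow_mul]
    exact Subgroup.zpow_mem _ (Subgroup.mem_zpowers _) _
  · rintro hmem
    obtain ⟨n, hn⟩ := hmem
    change (finRotate 5) ^ n = _ at hn
    have : h = cycle1342⁻¹ * (finRotate 5) ^ n * cycle1342 := by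
      rw [hn]; group
    have h2 : cycle1342⁻¹ * finRotate 5 * cycle1342 = (finRotate 5) ^ (2 : ℕ) := by decide
    have key : cycle1342⁻¹ * (finRotate 5) ^ n * cycle1342
        = ((finRotate 5) ^ (2 : ℕ) : Equiv.Perm (Fin 5)) ^ n := by
      rw [← h2]
      simpa [inv_inv] using (@conj_zpow _ _ n (cycle1342⁻¹) (finRotate 5)).symm
    rw [this, key, ← zpow_natCast, ← zpow_mul]
    exact Subgroup.zpow_mem _ (Subgroup.mem_zpowers _) _

/-- For the matched pair `(S_4, C_5)` from the exact factorization
`S_5 = F·C_5` (actions determined by `g·x = (g ▷ x)·(g ◁ x)`): the action `▷` of `C_5`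
on the cyclic subgroup `⟨(1 3 4 2)⟩ ≤ F` is trivial. -/
theorem s4_c5_acts_trivially_on_cycle
    (r : Subgroup.zpowers (finRotate 5) →
         MulAction.stabilizer (Equiv.Perm (Fin 5)) (4 : Fin 5) →
         MulAction.stabilizer (Equiv.Perm (Fin 5)) (4 : Fin 5))
    (l : Subgroup.zpowers (finRotate 5) →
         MulAction.stabilizer (Equiv.Perm (Fin 5)) (4 : Fin 5) →
         Subgroup.zpowers (finRotate 5))
    (hdef : ∀ (g : Subgroup.zpowers (finRotate 5))
        (x : MulAction.stabilizer (Equiv.Perm (Fin 5)) (4 : Fin 5)),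
        (↑g * ↑x : Equiv.Perm (Fin 5)) = ↑(r g x) * ↑(l g x)) :
    ∀ (g : Subgroup.zpowers (finRotate 5))
      (x : MulAction.stabilizer (Equiv.Perm (Fin 5)) (4 : Fin 5)),
      (↑x : Equiv.Perm (Fin 5)) ∈ Subgroup.zpowers cycle1342 → r g x = x := by
  intro g x hx
  -- x normalizes C₅, hence so does x⁻¹
  have hxinv : (↑x : Equiv.Perm (Fin 5))⁻¹ ∈ Subgroup.normalizer (Subgroup.zpowers (finRotate 5) : Set (Equiv.Perm (Fin 5))) :=
    inv_mem (Subgroup.zpowers_le.mpr c_mem_norm hx)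
  have hc' : (↑x : Equiv.Perm (Fin 5))⁻¹ * ↑g * ↑x ∈ Subgroup.zpowers (finRotate 5) := by
    have := (Subgroup.mem_normalizer_iff.mp hxinv (↑g)).mp g.2
    simpa [mul_assoc] using this
  -- w := (r g x)⁻¹ * x lies in C₅ and fixes 4, hence is 1
  set w : Equiv.Perm (Fin 5) := (↑(r g x))⁻¹ * ↑x with hw
  have hwC5 : w ∈ Subgroup.zpowers (finRotate 5) := by
    have hl : (↑(l g x) : Equiv.Perm (Fin 5)) = (↑(r g x) : Equiv.Perm (Fin 5))⁻¹ * (↑g * ↑x) := by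
      rw [hdef g x]; group
    have hwl : w = (↑(l g x) : Equiv.Perm (Fin 5)) * ((↑x : Equiv.Perm (Fin 5))⁻¹ * ↑g * ↑x)⁻¹ := by
      rw [hw, hl]; group
    rw [hwl]
    exact mul_mem (l g x).2 (inv_mem hc')
  have hr4 : (↑(r g x) : Equiv.Perm (Fin 5)) 4 = 4 := by
    have := (r g x).2
    rwa [MulAction.mem_stabilizer_iff, Equiv.Perm.smul_def] at this
  have hx4 : (↑x : Equiv.Perm (Fin 5)) 4 = 4 := by
    have := x.2
    rwa [MulAction.mem_stabilizer_iff, Equiv.Perm.smul_def] at this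
  have hw4 : w 4 = 4 := by
    rw [hw, Equiv.Perm.mul_apply, hx4]
    rw [Equiv.Perm.inv_eq_iff_eq]
    exact hr4.symm
  have hw1 : w = 1 := zpowers_fix4 w hwC5 hw4
  have : (↑(r g x) : Equiv.Perm (Fin 5)) = ↑x := by
    have := hw1
    rw [hw] at this
    calc (↑(r g x) : Equiv.Perm (Fin 5)) = ↑(r g x) * ((↑(r g x))⁻¹ * ↑x) := by
          rw [this, mul_one]
      _ = ↑x := by group
  exact Subtype.ext this
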